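/- Let K ≥ 1, let a ∈ ℝ with |a| < 1, let v > 0, and set σ² = v/(1 − a²). Let d_1, …, d_K satisfy 0 < d_k ≤ σ² for every k, and define d by 1/d = Σ_{k=1}^K 1/d_k − (K−1)/σ². Then 1/d ≥ 1/σ² > 0 (so d is well defined and 0 < d ≤ σ²), and 1/(a²·d + v) ≤ Σ_{k=1}^K 1/(a²·d_k + v) − (K−1)/σ². Moreover, if a ≠ 0, equality holds if and only if d_k = σ² for all but at most one index k. -/

import Mathlib

lemma pair_sub_eq (c v s x y : ℝ) (hv : 0 < v) (hs : c + v * s = 1)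
    (hx : 0 ≤ x) (hy : 0 ≤ y) :
    (s+x)/(c+v*(s+x)) + (s+y)/(c+v*(s+y)) - ((s+x+y)/(c+v*(s+x+y)) + s)
      = c*(v*(x*(y*(2+v*x+v*y)))) / ((1+v*x)*((1+v*y)*(1+v*(x+y)))) := by
  have hA : (0:ℝ) < 1 + v*x := by nlinarith
  have hB : (0:ℝ) < 1 + v*y := by nlinarith
  have hC : (0:ℝ) < 1 + v*(x+y) := by nlinarith
  have e1 : c+v*(s+x) = 1 + v*x := by rw [← hs]; ring
  have e2 : c+v*(s+y) = 1 + v*y := by rw [← hs]; ring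
  have e3 : c+v*(s+x+y) = 1 + v*(x+y) := by rw [← hs]; ring
  have hc' : c = 1 - v*s := by linarith
  rw [e1, e2, e3, hc']
  field_simp
  ring

lemma pair_le (c v s x y : ℝ) (hc : 0 ≤ c) (hv : 0 < v) (hs : c + v * s = 1)
    (hx : 0 ≤ x) (hy : 0 ≤ y) :
    (s+x+y)/(c+v*(s+x+y)) + s ≤ (s+x)/(c+v*(s+x)) + (s+y)/(c+v*(s+y)) := by
  have key := pair_sub_eq c v s x y hv hs hx hy
  have hA : (0:ℝ) < 1 + v*x := by nlinarith
  have hB : (0:ℝ) < 1 + v*y := by nlinarith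
  have hC : (0:ℝ) < 1 + v*(x+y) := by nlinarith
  have hnum : 0 ≤ c*(v*(x*(y*(2+v*x+v*y)))) := by positivity
  have := div_nonneg hnum (by positivity : (0:ℝ) ≤ (1+v*x)*((1+v*y)*(1+v*(x+y))))
  linarith [key ▸ this]

lemma pair_lt (c v s x y : ℝ) (hc : 0 < c) (hv : 0 < v) (hs : c + v * s = 1)
    (hx : 0 < x) (hy : 0 < y) :
    (s+x+y)/(c+v*(s+x+y)) + s < (s+x)/(c+v*(s+x)) + (s+y)/(c+v*(s+y)) := by
  have key := pair_sub_eq c v s x y hv hs hx.le hy.le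
  have hA : (0:ℝ) < 1 + v*x := by nlinarith
  have hB : (0:ℝ) < 1 + v*y := by nlinarith
  have hC : (0:ℝ) < 1 + v*(x+y) := by nlinarith
  have hnum : 0 < c*(v*(x*(y*(2+v*x+v*y)))) := by positivity
  have := div_pos hnum (by positivity : (0:ℝ) < (1+v*x)*((1+v*y)*(1+v*(x+y))))
  linarith [key ▸ this]

lemma sum_le_aux {ι : Type*} (c v s : ℝ) (hc : 0 ≤ c) (hv : 0 < v) (hs : c + v * s = 1)
    (t : Finset ι) (x : ι → ℝ) (hx : ∀ i ∈ t, 0 ≤ x i) :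
    (s + ∑ i ∈ t, x i)/(c + v*(s + ∑ i ∈ t, x i)) + (t.card : ℝ) * s
      ≤ (∑ i ∈ t, (s + x i)/(c + v*(s + x i))) + s := by
  induction t using Finset.cons_induction with
  | empty => simp [hs]
  | cons a t' hat' ih =>
    have hxa : 0 ≤ x a := hx a (Finset.mem_cons_self _ _)
    have hx' : ∀ i ∈ t', 0 ≤ x i := fun i hi => hx i (Finset.mem_cons_of_mem hi)
    have hS : 0 ≤ ∑ i ∈ t', x i := Finset.sum_nonneg hx'
    have hp := pair_le c v s (∑ i ∈ t', x i) (x a) hc hv hs hS hxa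
    have ih' := ih hx'
    rw [Finset.sum_cons, Finset.sum_cons, Finset.card_cons]
    have harg : s + (x a + ∑ i ∈ t', x i) = s + (∑ i ∈ t', x i) + x a := by ring
    rw [harg]
    push_cast
    linarith

lemma sum_lt_aux {ι : Type*} [DecidableEq ι] (c v s : ℝ) (hc : 0 < c) (hv : 0 < v)
    (hs : c + v * s = 1)
    (t : Finset ι) (x : ι → ℝ) (hx : ∀ i ∈ t, 0 ≤ x i)
    (i j : ι) (hi : i ∈ t) (hj : j ∈ t) (hij : i ≠ j) (hxi : 0 < x i) (hxj : 0 < x j) :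
    (s + ∑ k ∈ t, x k)/(c + v*(s + ∑ k ∈ t, x k)) + (t.card : ℝ) * s
      < (∑ k ∈ t, (s + x k)/(c + v*(s + x k))) + s := by
  have hie : i ∈ t.erase j := Finset.mem_erase.mpr ⟨hij, hi⟩
  have hx' : ∀ k ∈ t.erase j, 0 ≤ x k := fun k hk => hx k (Finset.mem_of_mem_erase hk)
  have hX : 0 < ∑ k ∈ t.erase j, x k :=
    lt_of_lt_of_le hxi (Finset.single_le_sum hx' hie)
  have hsum : ∑ k ∈ t, x k = x j + ∑ k ∈ t.erase j, x k := (Finset.add_sum_erase t x hj).symm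
  have hsumF : ∑ k ∈ t, (s + x k)/(c + v*(s + x k))
      = (s + x j)/(c + v*(s + x j)) + ∑ k ∈ t.erase j, (s + x k)/(c + v*(s + x k)) :=
    (Finset.add_sum_erase t _ hj).symm
  have hcard : ((t.erase j).card : ℝ) + 1 = (t.card : ℝ) := by
    rw [← Nat.cast_add_one, Finset.card_erase_add_one hj]
  have hp := pair_lt c v s (∑ k ∈ t.erase j, x k) (x j) hc hv hs hX hxj
  have hle := sum_le_aux c v s hc.le hv hs (t.erase j) x hx'
  have harg : s + (x j + ∑ k ∈ t.erase j, x k) = s + (∑ k ∈ t.erase j, x k) + x j := by ring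
  rw [hsum, hsumF, harg, ← hcard]
  linarith

theorem stmt10 (K : ℕ) (hK : 1 ≤ K) (a v : ℝ) (ha : |a| < 1) (hv : 0 < v)
    (σ2 : ℝ) (hσ2 : σ2 = v / (1 - a ^ 2))
    (dk : Fin K → ℝ) (hdk : ∀ k, 0 < dk k ∧ dk k ≤ σ2)
    (d : ℝ) (hd : 1 / d = ∑ k, 1 / dk k - ((K : ℝ) - 1) / σ2) :
    (1 / σ2 ≤ 1 / d ∧ 0 < 1 / d ∧ 0 < d ∧ d ≤ σ2) ∧
    1 / (a ^ 2 * d + v) ≤ ∑ k, 1 / (a ^ 2 * dk k + v) - ((K : ℝ) - 1) / σ2 ∧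
    (a ≠ 0 →
      (1 / (a ^ 2 * d + v) = ∑ k, 1 / (a ^ 2 * dk k + v) - ((K : ℝ) - 1) / σ2 ↔
        ∃ k0, ∀ k, k ≠ k0 → dk k = σ2)) := by
  have ha2 : a ^ 2 < 1 := by
    have h := abs_lt.mp ha
    nlinarith [h.1, h.2]
  have h1a : (0:ℝ) < 1 - a ^ 2 := by linarith
  have hσ2pos : 0 < σ2 := hσ2 ▸ div_pos hv h1a
  set s : ℝ := 1 / σ2 with hsdef
  have hspos : 0 < s := one_div_pos.mpr hσ2pos
  have hs : a ^ 2 + v * s = 1 := by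
    rw [hsdef, hσ2, one_div_div]
    field_simp
    ring
  set x : Fin K → ℝ := fun k => 1 / dk k - s with hxdef
  have hx : ∀ k, 0 ≤ x k := by
    intro k
    have := one_div_le_one_div_of_le (hdk k).1 (hdk k).2
    simp only [hxdef]
    linarith
  have hKs : ((K : ℝ) - 1) / σ2 = (K : ℝ) * s - s := by
    rw [hsdef]; field_simp
  have hd' : 1 / d = s + ∑ k, x k := by
    rw [hd, hKs]
    simp only [hxdef]
    rw [Finset.sum_sub_distrib, Finset.sum_const, Finset.card_univ, Fintype.card_fin]
    push_cast; ring
  have hsumnn : 0 ≤ ∑ k, x k := Finset.sum_nonneg fun k _ => hx k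
  have h1 : 1 / σ2 ≤ 1 / d := by rw [hd']; simp only [← hsdef]; linarith
  have h2 : 0 < 1 / d := lt_of_lt_of_le hspos h1
  have h3 : 0 < d := one_div_pos.mp h2
  have h4 : d ≤ σ2 := by
    by_contra h
    push_neg at h
    have := one_div_lt_one_div_of_lt hσ2pos h
    linarith
  have hF : ∀ e : ℝ, 0 < e → 1 / (a ^ 2 * e + v) = (1/e) / (a ^ 2 + v * (1/e)) := by
    intro e he
    have he' : e ≠ 0 := ne_of_gt he
    have hde : a ^ 2 * e + v ≠ 0 := by positivity
    rw [div_eq_div_iff hde (by positivity)]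
    field_simp
  have hLHS : 1 / (a ^ 2 * d + v)
      = (s + ∑ k, x k) / (a ^ 2 + v * (s + ∑ k, x k)) := by
    rw [hF d h3, hd']
  have hterm : ∀ k, 1 / (a ^ 2 * dk k + v) = (s + x k) / (a ^ 2 + v * (s + x k)) := by
    intro k
    have hk : s + x k = 1 / dk k := by simp only [hxdef]; ring
    rw [hF (dk k) (hdk k).1, hk]
  have hsumR : ∑ k, 1 / (a ^ 2 * dk k + v)
      = ∑ k, (s + x k) / (a ^ 2 + v * (s + x k)) :=
    Finset.sum_congr rfl fun k _ => hterm k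
  have hmain := sum_le_aux (a ^ 2) v s (by positivity) hv hs Finset.univ x
    (fun i _ => hx i)
  rw [Finset.card_univ, Fintype.card_fin] at hmain
  refine ⟨⟨h1, h2, h3, h4⟩, ?_, ?_⟩
  · rw [hLHS, hsumR, hKs]
    linarith
  · intro hane
    have hcpos : 0 < a ^ 2 := by positivity
    have hdkσ : ∀ k, dk k ≠ σ2 → 0 < x k := by
      intro k hk
      rcases (hx k).lt_or_eq with h | h
      · exact h
      · exfalso
        apply hk
        have h5 : 1 / dk k = 1 / σ2 := by
          simp only [hxdef] at h
          rw [hsdef] at h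
          linarith
        have := congrArg (fun t => 1 / t) h5
        simpa [one_div_one_div] using this
    constructor
    · intro heq
      by_contra hcon
      push_neg at hcon
      obtain ⟨i, hi1, hi2⟩ := hcon ⟨0, hK⟩
      obtain ⟨j, hj1, hj2⟩ := hcon i
      have hstrict := sum_lt_aux (a ^ 2) v s hcpos hv hs Finset.univ x
        (fun k _ => hx k) j i (Finset.mem_univ j) (Finset.mem_univ i) hj1
        (hdkσ j hj2) (hdkσ i hi2)
      rw [Finset.card_univ, Fintype.card_fin] at hstrict
      rw [hLHS, hsumR, hKs] at heq
      linarith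
    · rintro ⟨k0, hk0⟩
      have hxz : ∀ k, k ≠ k0 → x k = 0 := by
        intro k hk
        simp only [hxdef, hk0 k hk, ← hsdef, sub_self]
      have hsum0 : ∑ k, x k = x k0 := Fintype.sum_eq_single k0 hxz
      have hdd : d = dk k0 := by
        have h5 : 1 / d = 1 / dk k0 := by
          rw [hd', hsum0]; simp only [hxdef]; ring
        have := congrArg (fun t => 1 / t) h5
        simpa [one_div_one_div] using this
      have hfix : a ^ 2 * σ2 + v = σ2 := by
        rw [hσ2]; field_simp; ring
      have hterm' : ∀ k, k ≠ k0 → 1 / (a ^ 2 * dk k + v) = s := by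
        intro k hk
        rw [hk0 k hk, hfix, hsdef]
      have hsplit : ∑ k, 1 / (a ^ 2 * dk k + v)
          = 1 / (a ^ 2 * dk k0 + v) + ((K : ℝ) - 1) * s := by
        rw [← Finset.add_sum_erase Finset.univ _ (Finset.mem_univ k0)]
        congr 1
        rw [Finset.sum_congr rfl (fun k hk => hterm' k (Finset.ne_of_mem_erase hk)),
          Finset.sum_const, nsmul_eq_mul,
          Finset.card_erase_of_mem (Finset.mem_univ k0), Finset.card_univ,
          Fintype.card_fin, Nat.cast_sub hK]
        push_cast; ring
      rw [hdd, hsplit, hKs]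
      ring
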